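/- Let G be a finite simple graph on p vertices with Gaussian rank r(G), and let r be an integer with r > r(G). Then for every p×p positive semidefinite matrix A of rank r that is in general position, there exists a positive definite p×p matrix P with P ≍_G A. -/

import Mathlib

open Matrix MeasureTheory

/-- Two matrices match on a graph `G`: equal diagonals and equal entries on all edges. -/
def MatchOn {V : Type*} (G : SimpleGraph V) (A B : Matrix V V ℝ) : Prop :=
  (∀ i, A i i = B i i) ∧ ∀ i j, G.Adj i j → A i j = B i j

/-- A real symmetric positive semidefinite matrix of rank `d` is in general position if
every `d × d` principal submatrix is nonsingular. -/
def InGenPos {V : Type*} [Fintype V] [DecidableEq V] (A : Matrix V V ℝ) (d : ℕ) : Prop :=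
  A.PosSemidef ∧ A.rank = d ∧
    ∀ α : Finset V, α.card = d →
      (A.submatrix (fun i : α => (i : V)) (fun i : α => (i : V))).det ≠ 0

/-- The defining property of the Gaussian rank at level `r`. -/
def GRankProp {V : Type*} [Fintype V] [DecidableEq V] (G : SimpleGraph V) (r : ℕ) : Prop :=
  ∀ A : Matrix V V ℝ, InGenPos A r → ∃ P : Matrix V V ℝ, P.PosDef ∧ MatchOn G P A

/-- The Gaussian rank of a graph. -/
noncomputable def gaussianRank {V : Type*} [Fintype V] [DecidableEq V]
    (G : SimpleGraph V) : ℕ :=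
  sInf {r : ℕ | 0 < r ∧ GRankProp G r}

/-- Vertex connectivity: the least size of a vertex set whose deletion disconnects the
graph or leaves at most one vertex. -/
noncomputable def vertexConn {V : Type*} (G : SimpleGraph V) : ℕ :=
  sInf {k : ℕ | ∃ S : Set V, S.ncard = k ∧
    (¬ (G.induce Sᶜ).Connected ∨ Sᶜ.ncard ≤ 1)}

/-- Subgraph connectivity number: the maximum vertex connectivity over all subgraphs. -/
noncomputable def subgraphConn {V : Type*} (G : SimpleGraph V) : ℕ :=
  sSup {k : ℕ | ∃ H : G.Subgraph, vertexConn H.coe = k}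

/-- Minimum degree of a graph. -/
noncomputable def minDeg {V : Type*} (G : SimpleGraph V) : ℕ :=
  sInf {k : ℕ | ∃ v, (G.neighborSet v).ncard = k}

/-- Degeneracy number: the maximum over all subgraphs of the minimum degree. -/
noncomputable def degeneracy {V : Type*} (G : SimpleGraph V) : ℕ :=
  sSup {k : ℕ | ∃ H : G.Subgraph, minDeg H.coe = k}



set_option linter.unusedSectionVars false
namespace GRAux

variable {n m : Type*} [Fintype n] [Fintype m] [DecidableEq n] [DecidableEq m]

def sel (f : m → n) : Matrix n m ℝ := Matrix.of fun i j => if f j = i then 1 else 0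

lemma sel_conj (A : Matrix n n ℝ) (f : m → n) : (sel f)ᵀ * A * (sel f) = A.submatrix f f := by
  ext j l
  simp [sel, Matrix.mul_apply, ite_mul, mul_ite, Finset.sum_ite_eq, Finset.sum_ite_eq']

lemma sel_mulVec (f : m → n) (hf : Function.Injective f) (x : m → ℝ) (j : m) :
    ((sel f) *ᵥ x) (f j) = x j := by
  simp [sel, Matrix.mulVec, dotProduct, hf.eq_iff, Finset.sum_ite_eq']

lemma posSemidef_submatrix {A : Matrix n n ℝ} (hA : A.PosSemidef) (f : m → n) :
    (A.submatrix f f).PosSemidef := by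
  have := hA.conjTranspose_mul_mul_same (sel f)
  rwa [Matrix.conjTranspose_eq_transpose_of_trivial, sel_conj] at this

lemma dot_conj (E : Matrix n m ℝ) (A : Matrix n n ℝ) (x : m → ℝ) :
    x ⬝ᵥ (Eᵀ * A * E) *ᵥ x = (E *ᵥ x) ⬝ᵥ A *ᵥ (E *ᵥ x) := by
  rw [← Matrix.mulVec_mulVec, ← Matrix.mulVec_mulVec, Matrix.dotProduct_mulVec x Eᵀ,
    Matrix.vecMul_transpose]

lemma star_eq (x : m → ℝ) : star x = x := funext fun i => star_trivial (x i)

lemma posDef_submatrix {A : Matrix n n ℝ} (hA : A.PosDef) (f : m → n)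
    (hf : Function.Injective f) : (A.submatrix f f).PosDef := by
  refine .of_dotProduct_mulVec_pos (hA.1.submatrix f) fun x hx => ?_
  have hx' : (sel f) *ᵥ x ≠ 0 := by
    intro h0
    obtain ⟨j, hj⟩ := Function.ne_iff.mp hx
    exact hj (by rw [← sel_mulVec f hf x j, h0]; rfl)
  have h := hA.dotProduct_mulVec_pos hx'
  rw [star_eq] at h ⊢
  rwa [← sel_conj A f, dot_conj]

lemma posDef_of_psd_det {A : Matrix n n ℝ} (hA : A.PosSemidef) (h : A.det ≠ 0) : A.PosDef := by
  refine .of_dotProduct_mulVec_pos hA.1 fun x hx => ?_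
  rcases (hA.dotProduct_mulVec_nonneg x).lt_or_eq with hlt | heq
  · exact hlt
  · exfalso
    have h0 := (hA.dotProduct_mulVec_zero_iff x).mp heq.symm
    have hinj := Matrix.mulVec_injective_iff_isUnit.mpr ((Matrix.isUnit_iff_isUnit_det _).mpr h.isUnit)
    exact hx (hinj (h0.trans (Matrix.mulVec_zero A).symm))


lemma cs_bound {p m : ℕ} (M : Matrix (Fin p) (Fin m) ℝ) (y : Fin p → ℝ) :
    (Mᵀ *ᵥ y) ⬝ᵥ (Mᵀ *ᵥ y) ≤ (∑ i, ∑ j, (M i j)^2) * (y ⬝ᵥ y) := by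
  have h1 : ∀ j, ((Mᵀ *ᵥ y) j)^2 ≤ (∑ i, (M i j)^2) * (∑ i, (y i)^2) := by
    intro j
    have h := Finset.sum_mul_sq_le_sq_mul_sq Finset.univ (fun i => M i j) y
    simpa [Matrix.mulVec, dotProduct] using h
  calc (Mᵀ *ᵥ y) ⬝ᵥ (Mᵀ *ᵥ y) = ∑ j, ((Mᵀ *ᵥ y) j)^2 := by simp [dotProduct, sq]
    _ ≤ ∑ j : Fin m, (∑ i, (M i j)^2) * (∑ i, (y i)^2) := Finset.sum_le_sum fun j _ => h1 j
    _ = (∑ j : Fin m, ∑ i, (M i j)^2) * (∑ i, (y i)^2) := by rw [← Finset.sum_mul]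
    _ = (∑ i, ∑ j, (M i j)^2) * (y ⬝ᵥ y) := by rw [Finset.sum_comm]; simp [dotProduct, sq]

lemma card_le_rank {p : ℕ} (A : Matrix (Fin p) (Fin p) ℝ) (α : Finset (Fin p))
    (h : (A.submatrix (fun i : α => (i : Fin p)) (fun i : α => (i : Fin p))).det ≠ 0) :
    α.card ≤ A.rank := by
  classical
  set v : α → (Fin p → ℝ) := fun j i => A i (j : Fin p) with hv
  have hvi : LinearIndependent ℝ v := by
    rw [Fintype.linearIndependent_iff]
    intro c hc
    have hB : (A.submatrix (fun i : α => (i : Fin p)) (fun i : α => (i : Fin p))) *ᵥ c = 0 := by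
      funext i
      have h1 := congrFun hc (i : Fin p)
      simp only [Finset.sum_apply, Pi.smul_apply, smul_eq_mul, Pi.zero_apply, hv] at h1
      simpa [Matrix.mulVec, dotProduct, mul_comm] using h1
    have hinj := Matrix.mulVec_injective_iff_isUnit.mpr
      ((Matrix.isUnit_iff_isUnit_det _).mpr h.isUnit)
    intro j
    have := hinj (hB.trans (Matrix.mulVec_zero _).symm)
    exact congrFun this j
  have hmem : ∀ j : α, v j ∈ LinearMap.range A.mulVecLin := by
    intro j
    refine ⟨Pi.single (j : Fin p) 1, ?_⟩
    funext i
    simp [Matrix.mulVecLin_apply, Matrix.mulVec_single, hv]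
  have hspan : Submodule.span ℝ (Set.range v) ≤ LinearMap.range A.mulVecLin :=
    Submodule.span_le.mpr (by rintro _ ⟨j, rfl⟩; exact hmem j)
  calc α.card = Fintype.card α := (Fintype.card_coe α).symm
    _ = Module.finrank ℝ (Submodule.span ℝ (Set.range v)) := (finrank_span_eq_card hvi).symm
    _ ≤ Module.finrank ℝ (LinearMap.range A.mulVecLin) := Submodule.finrank_mono hspan
    _ = A.rank := rfl

lemma gRankProp_card {p : ℕ} (G : SimpleGraph (Fin p)) : GRankProp G p := by
  intro M hM
  obtain ⟨hpsd, -, hgp⟩ := hM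
  have hdet : M.det ≠ 0 := by
    have h := hgp Finset.univ (by simp)
    rwa [show (fun i : (Finset.univ : Finset (Fin p)) => (i : Fin p)) =
        ⇑(Equiv.subtypeUnivEquiv (fun x : Fin p => Finset.mem_univ x)) from
        funext fun x => by simp,
      Matrix.det_submatrix_equiv_self] at h
  exact ⟨M, posDef_of_psd_det hpsd hdet, fun i => rfl, fun i j _ => rfl⟩

lemma exists_generic {p r₀ : ℕ} (Λ : Matrix (Fin p) (Fin p) ℝ)
    (hw : ∀ α : Finset (Fin p), α.card = r₀ → ∃ N : Matrix (Fin p) (Fin r₀) ℝ,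
      (((Λ * N).submatrix (fun i : α => (i : Fin p)) id) *
        ((Λ * N).submatrix (fun i : α => (i : Fin p)) id)ᵀ).det ≠ 0) :
    ∃ N : Matrix (Fin p) (Fin r₀) ℝ, ∀ α : Finset (Fin p), α.card = r₀ →
      (((Λ * N).submatrix (fun i : α => (i : Fin p)) id) *
        ((Λ * N).submatrix (fun i : α => (i : Fin p)) id)ᵀ).det ≠ 0 := by
  classical
  let X : Matrix (Fin p) (Fin r₀) (MvPolynomial (Fin p × Fin r₀) ℝ) :=
    Matrix.of fun i j => MvPolynomial.X (i, j)
  let Λc : Matrix (Fin p) (Fin p) (MvPolynomial (Fin p × Fin r₀) ℝ) := Λ.map MvPolynomial.C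
  let Q : Finset (Fin p) → MvPolynomial (Fin p × Fin r₀) ℝ := fun α =>
    (((Λc * X).submatrix (fun i : α => (i : Fin p)) id) *
      ((Λc * X).submatrix (fun i : α => (i : Fin p)) id)ᵀ).det
  have heval : ∀ (N : Matrix (Fin p) (Fin r₀) ℝ) (α : Finset (Fin p)),
      MvPolynomial.eval (fun s : Fin p × Fin r₀ => N s.1 s.2) (Q α) =
      (((Λ * N).submatrix (fun i : α => (i : Fin p)) id) *
        ((Λ * N).submatrix (fun i : α => (i : Fin p)) id)ᵀ).det := by
    intro N α
    rw [show Q α = _ from rfl, RingHom.map_det]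
    congr 1
    ext i j
    simp [Λc, X, Matrix.mul_apply, Matrix.map_apply, Finset.mul_sum, Finset.sum_mul]
  set F := (Finset.univ : Finset (Fin p)).powersetCard r₀ with hF
  have hprod : (∏ α ∈ F, Q α) ≠ 0 := by
    rw [Finset.prod_ne_zero_iff]
    intro α hα
    obtain ⟨N, hN⟩ := hw α (Finset.mem_powersetCard.mp hα).2
    intro h0
    exact hN (by rw [← heval N α, h0, map_zero])
  have hex : ∃ x : Fin p × Fin r₀ → ℝ, MvPolynomial.eval x (∏ α ∈ F, Q α) ≠ 0 := by
    by_contra hcon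
    push_neg at hcon
    exact hprod (MvPolynomial.funext fun x => by simpa using hcon x)
  obtain ⟨x, hx⟩ := hex
  have hxx : (fun s : Fin p × Fin r₀ => (Matrix.of fun i j => x (i, j)) s.1 s.2) = x :=
    funext fun s => by cases s; rfl
  refine ⟨Matrix.of fun i j => x (i, j), fun α hα => ?_⟩
  rw [← heval, hxx]
  intro h0
  apply hx
  rw [map_prod]
  exact Finset.prod_eq_zero (by rw [hF, Finset.mem_powersetCard]; exact ⟨Finset.subset_univ _, hα⟩) h0

end GRAux


theorem grankProp_of_gaussianRank_lt {p : ℕ} (G : SimpleGraph (Fin p)) (r : ℕ)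
    (hr : gaussianRank G < r)
    (A : Matrix (Fin p) (Fin p) ℝ) (hA : InGenPos A r) :
    ∃ P : Matrix (Fin p) (Fin p) ℝ, P.PosDef ∧ MatchOn G P A := by
  classical
  obtain ⟨hpsd, hrank, hgp⟩ := hA
  have hrp : r ≤ p := by
    have h1 := Matrix.rank_le_card_width A
    rw [hrank, Fintype.card_fin] at h1
    exact h1
  have hr1 : 0 < r := lt_of_le_of_lt (Nat.zero_le _) hr
  have hp0 : 0 < p := lt_of_lt_of_le hr1 hrp
  set r₀ := gaussianRank G with hr₀def
  have hpS : p ∈ {k : ℕ | 0 < k ∧ GRankProp G k} := ⟨hp0, GRAux.gRankProp_card G⟩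
  obtain ⟨hr₀pos, hGR⟩ : 0 < r₀ ∧ GRankProp G r₀ := Nat.sInf_mem ⟨p, hpS⟩
  have hr₀p : r₀ ≤ p := Nat.sInf_le hpS
  have hr₀r : r₀ ≤ r := le_of_lt hr
  -- decompose A
  obtain ⟨B, hB⟩ : ∃ B : Matrix (Fin p) (Fin p) ℝ, A = Bᴴ * B := by
    open scoped MatrixOrder in
    obtain ⟨B, hB⟩ := CStarAlgebra.nonneg_iff_eq_star_mul_self.mp hpsd.nonneg
    exact ⟨B, hB⟩
  set Λ := Bᵀ with hΛ
  have hAeq : A = Λ * Λᵀ := by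
    rw [hB, hΛ, Matrix.transpose_transpose, Matrix.conjTranspose_eq_transpose_of_trivial]
  -- general position at level r₀
  have hgp₀ : ∀ α : Finset (Fin p), α.card = r₀ →
      (A.submatrix (fun i : α => (i : Fin p)) (fun i : α => (i : Fin p))).det ≠ 0 := by
    intro α hα
    obtain ⟨β, hαβ, -, hβcard⟩ : ∃ β, α ⊆ β ∧ β ⊆ Finset.univ ∧ β.card = (r - r₀) + α.card :=
      Finset.exists_subsuperset_card_eq (Finset.subset_univ α) (by omega)
      (by rw [hα, Finset.card_univ, Fintype.card_fin]; omega)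
    have hβr : β.card = r := by rw [hβcard, hα]; omega
    have hPD : (A.submatrix (fun i : β => (i : Fin p)) (fun i : β => (i : Fin p))).PosDef :=
      GRAux.posDef_of_psd_det (GRAux.posSemidef_submatrix hpsd _) (hgp β hβr)
    have hginj : Function.Injective (fun x : {y // y ∈ α} => (⟨x, hαβ x.2⟩ : {y // y ∈ β})) := by
      intro a b hab
      simp only [Subtype.mk.injEq] at hab
      exact Subtype.ext hab
    have hPD2 := GRAux.posDef_submatrix hPD _ hginj
    have heq : ((A.submatrix (fun i : β => (i : Fin p)) (fun i : β => (i : Fin p))).submatrix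
          (fun x : {y // y ∈ α} => (⟨x, hαβ x.2⟩ : {y // y ∈ β}))
          (fun x : {y // y ∈ α} => (⟨x, hαβ x.2⟩ : {y // y ∈ β})))
        = A.submatrix (fun i : α => (i : Fin p)) (fun i : α => (i : Fin p)) := by
      ext i j; simp
    rw [heq] at hPD2
    exact hPD2.det_pos.ne'
  -- witness for exists_generic
  have hwit : ∀ α : Finset (Fin p), α.card = r₀ → ∃ N : Matrix (Fin p) (Fin r₀) ℝ,
      (((Λ * N).submatrix (fun i : α => (i : Fin p)) id) *
        ((Λ * N).submatrix (fun i : α => (i : Fin p)) id)ᵀ).det ≠ 0 := by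
    intro α hα
    have e : {y // y ∈ α} ≃ Fin r₀ := Fintype.equivFinOfCardEq (by rw [Fintype.card_coe, hα])
    set N : Matrix (Fin p) (Fin r₀) ℝ := Matrix.of fun k j => Λ ((e.symm j : α) : Fin p) k with hN
    refine ⟨N, ?_⟩
    have hΛN : ∀ (a : Fin p) (j : Fin r₀), (Λ * N) a j = A a ((e.symm j : α) : Fin p) := by
      intro a j
      rw [hAeq]
      simp [hN, Matrix.mul_apply]
    have hMM : ((Λ * N).submatrix (fun i : α => (i : Fin p)) id) *
        ((Λ * N).submatrix (fun i : α => (i : Fin p)) id)ᵀ =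
        (A.submatrix (fun i : α => (i : Fin p)) (fun i : α => (i : Fin p))) *
        (A.submatrix (fun i : α => (i : Fin p)) (fun i : α => (i : Fin p)))ᵀ := by
      ext i i'
      simp only [Matrix.mul_apply, Matrix.transpose_apply, Matrix.submatrix_apply, id_eq, hΛN]
      exact Equiv.sum_comp e.symm (fun t => A (i : Fin p) (t : Fin p) * A (i' : Fin p) (t : Fin p))
    rw [hMM, Matrix.det_mul, Matrix.det_transpose]
    exact mul_ne_zero (hgp₀ α hα) (hgp₀ α hα)
  obtain ⟨N, hN⟩ := GRAux.exists_generic Λ hwit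
  -- scaling
  set s : ℝ := ∑ i, ∑ j, (N i j)^2 with hs
  have hs0 : 0 ≤ s := Finset.sum_nonneg fun i _ => Finset.sum_nonneg fun j _ => sq_nonneg _
  set ε : ℝ := (s + 1)⁻¹ with hε
  have hε0 : 0 < ε := by rw [hε]; positivity
  set C : Matrix (Fin p) (Fin r₀) ℝ := Λ * (ε • N) with hCdef
  set A' : Matrix (Fin p) (Fin p) ℝ := C * Cᵀ with hA'def
  have hA'psd : A'.PosSemidef := by
    have h := Matrix.posSemidef_self_mul_conjTranspose C
    rwa [Matrix.conjTranspose_eq_transpose_of_trivial] at h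
  have hC : C = ε • (Λ * N) := by rw [hCdef, Matrix.mul_smul]
  -- principal minors of A'
  have hA'sub : ∀ α : Finset (Fin p), α.card = r₀ →
      (A'.submatrix (fun i : α => (i : Fin p)) (fun i : α => (i : Fin p))).det ≠ 0 := by
    intro α hα
    have h1 : A'.submatrix (fun i : α => (i : Fin p)) (fun i : α => (i : Fin p)) =
        (C.submatrix (fun i : α => (i : Fin p)) id) *
        (C.submatrix (fun i : α => (i : Fin p)) id)ᵀ := by
      ext i j; simp [hA'def, Matrix.mul_apply]
    have h2 : C.submatrix (fun i : α => (i : Fin p)) id =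
        ε • ((Λ * N).submatrix (fun i : α => (i : Fin p)) id) := by
      rw [hC]; ext i j; simp
    have h3 : (ε • ((Λ * N).submatrix (fun i : α => (i : Fin p)) id)) *
        (ε • ((Λ * N).submatrix (fun i : α => (i : Fin p)) id))ᵀ =
        (ε * ε) • (((Λ * N).submatrix (fun i : α => (i : Fin p)) id) *
          ((Λ * N).submatrix (fun i : α => (i : Fin p)) id)ᵀ) := by
      rw [Matrix.transpose_smul, Matrix.smul_mul, Matrix.mul_smul, smul_smul]
    rw [h1, h2, h3, Matrix.det_smul]
    exact mul_ne_zero (pow_ne_zero _ (mul_ne_zero hε0.ne' hε0.ne')) (hN α hα)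
  -- rank of A'
  have hA'rank : A'.rank = r₀ := by
    apply le_antisymm
    · calc A'.rank ≤ C.rank := by rw [hA'def]; exact Matrix.rank_mul_le_left C Cᵀ
        _ ≤ Fintype.card (Fin r₀) := Matrix.rank_le_card_width C
        _ = r₀ := Fintype.card_fin r₀
    · obtain ⟨α₀, -, hα₀⟩ := Finset.exists_subset_card_eq (s := (Finset.univ : Finset (Fin p))) (n := r₀)
        (by simpa using hr₀p)
      exact hα₀ ▸ GRAux.card_le_rank A' α₀ (hA'sub α₀ hα₀)
  obtain ⟨Q, hQpd, hQd, hQe⟩ := hGR A' ⟨hA'psd, hA'rank, hA'sub⟩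
  -- A - A' is PSD
  have hD : (A - A').PosSemidef := by
    refine .of_dotProduct_mulVec_nonneg (hpsd.1.sub hA'psd.1) fun x => ?_
    rw [GRAux.star_eq, Matrix.sub_mulVec, dotProduct_sub]
    set y := Λᵀ *ᵥ x with hy
    have h1 : x ⬝ᵥ A *ᵥ x = y ⬝ᵥ y := by
      rw [hAeq, ← Matrix.mulVec_mulVec, Matrix.dotProduct_mulVec, ← Matrix.mulVec_transpose]
    have h2 : x ⬝ᵥ A' *ᵥ x = ((ε • N)ᵀ *ᵥ y) ⬝ᵥ ((ε • N)ᵀ *ᵥ y) := by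
      rw [hA'def, ← Matrix.mulVec_mulVec, Matrix.dotProduct_mulVec, ← Matrix.mulVec_transpose,
        hCdef, Matrix.transpose_mul, ← Matrix.mulVec_mulVec, hy]
    rw [h1, h2]
    have h3 := GRAux.cs_bound (ε • N) y
    have h4 : (∑ i, ∑ j, ((ε • N) i j)^2) = ε^2 * s := by
      rw [hs, Finset.mul_sum]
      refine Finset.sum_congr rfl fun i _ => ?_
      rw [Finset.mul_sum]
      refine Finset.sum_congr rfl fun j _ => ?_
      simp [mul_pow]
    have h5 : ε^2 * s ≤ 1 := by
      have hεs : ε * (s + 1) = 1 := by rw [hε]; field_simp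
      nlinarith [hεs, hs0, hε0, sq_nonneg (ε - 1)]
    have h6 : (0:ℝ) ≤ y ⬝ᵥ y := Finset.sum_nonneg fun i _ => mul_self_nonneg _
    rw [h4] at h3
    nlinarith
  refine ⟨Q + (A - A'), hQpd.add_posSemidef hD, fun i => ?_, fun i j hij => ?_⟩
  · have h := hQd i
    simp only [Matrix.add_apply, Matrix.sub_apply, h]
    ring
  · have h := hQe i j hij
    simp only [Matrix.add_apply, Matrix.sub_apply, h]
    ring
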